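/- The function y ↦ ζ(y)/φ(y), where φ(y) = y - 1 - log y and ζ(y) = (y-1)^2/y, extended by the value 2 at y = 1, is nonincreasing on (0,∞). -/

import Mathlib

open Real

noncomputable def zetaPhiRatio (y : ℝ) : ℝ :=
  if y = 1 then 2 else ((y - 1) ^ 2 / y) / (y - 1 - Real.log y)

/-- key inequality A : `2 log y ≤ y - 1/y` for `y ≥ 1`. -/
lemma keyA : ∀ y : ℝ, 1 ≤ y → 2 * Real.log y ≤ y - y⁻¹ := by
  have hmono : MonotoneOn (fun t : ℝ => t - t⁻¹ - 2 * Real.log t) (Set.Ici 1) := by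
    apply monotoneOn_of_hasDerivWithinAt_nonneg (f' := fun t => 1 - (-(t^2)⁻¹) - 2 * t⁻¹)
      (convex_Ici 1)
    · intro t ht
      have ht0 : t ≠ 0 := by rw [Set.mem_Ici] at ht; positivity
      exact ((continuousAt_id.sub (continuousAt_inv₀ ht0)).sub
        ((Real.continuousAt_log ht0).const_mul 2)).continuousWithinAt
    · intro t ht
      rw [interior_Ici] at ht
      have ht0 : t ≠ 0 := by have : (1:ℝ) < t := ht; positivity
      exact (((hasDerivAt_id t).sub (hasDerivAt_inv ht0)).sub
        ((Real.hasDerivAt_log ht0).const_mul 2)).hasDerivWithinAt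
    · intro t ht
      rw [interior_Ici] at ht
      have ht1 : (1:ℝ) < t := ht
      have ht0 : (0:ℝ) < t := by linarith
      have h : 1 - (-(t^2)⁻¹) - 2 * t⁻¹ = (t-1)^2 / t^2 := by field_simp; ring
      rw [h]; positivity
  intro y hy
  have := hmono (Set.mem_Ici.2 le_rfl) (Set.mem_Ici.2 hy) hy
  simp at this
  linarith

/-- key inequality B : `2(y-1) ≤ (y+1) log y` for `y ≥ 1`. -/
lemma keyB : ∀ y : ℝ, 1 ≤ y → 2 * (y - 1) ≤ (y + 1) * Real.log y := by
  have hmono : MonotoneOn (fun t : ℝ => (t + 1) * Real.log t - 2 * (t - 1)) (Set.Ici 1) := by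
    apply monotoneOn_of_hasDerivWithinAt_nonneg
      (f' := fun t => 1 * Real.log t + (t + 1) * t⁻¹ - 2 * 1) (convex_Ici 1)
    · intro t ht
      have ht0 : t ≠ 0 := by rw [Set.mem_Ici] at ht; positivity
      exact (((continuousAt_id.add continuousAt_const).mul
        (Real.continuousAt_log ht0)).sub
        ((continuousAt_id.sub continuousAt_const).const_mul 2)).continuousWithinAt
    · intro t ht
      rw [interior_Ici] at ht
      have ht0 : t ≠ 0 := by have : (1:ℝ) < t := ht; positivity
      exact ((((hasDerivAt_id t).add_const 1).mul (Real.hasDerivAt_log ht0)).sub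
        (((hasDerivAt_id t).sub_const 1).const_mul 2)).hasDerivWithinAt
    · intro t ht
      rw [interior_Ici] at ht
      have ht1 : (1:ℝ) < t := ht
      have ht0 : (0:ℝ) < t := by linarith
      have hlog : 1 - t⁻¹ ≤ Real.log t := by
        have h := Real.log_le_sub_one_of_pos (show (0:ℝ) < t⁻¹ by positivity)
        rw [Real.log_inv] at h
        linarith
      have htt : (t + 1) * t⁻¹ = 1 + t⁻¹ := by field_simp
      rw [htt]
      nlinarith
  intro y hy
  have := hmono (Set.mem_Ici.2 le_rfl) (Set.mem_Ici.2 hy) hy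
  simp at this
  linarith

/-- B on the other side: `(y+1) log y ≤ 2 (y-1)` for `0 < y ≤ 1`. -/
lemma keyB' : ∀ y : ℝ, 0 < y → y ≤ 1 → (y + 1) * Real.log y ≤ 2 * (y - 1) := by
  intro y hy0 hy1
  have h := keyB y⁻¹ (by
    have h := mul_inv_cancel₀ (ne_of_gt hy0)
    nlinarith [inv_pos.2 hy0])
  rw [Real.log_inv] at h
  have h2 : y * (2 * (y⁻¹ - 1)) ≤ y * ((y⁻¹ + 1) * -Real.log y) :=
    mul_le_mul_of_nonneg_left h hy0.le
  have hyy : y * y⁻¹ = 1 := mul_inv_cancel₀ (ne_of_gt hy0)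
  nlinarith [h2]

/-- A on the other side: `y - 1/y ≤ 2 log y` for `0 < y ≤ 1`. -/
lemma keyA' : ∀ y : ℝ, 0 < y → y ≤ 1 → y - y⁻¹ ≤ 2 * Real.log y := by
  intro y hy0 hy1
  have h := keyA y⁻¹ (by
    have h := mul_inv_cancel₀ (ne_of_gt hy0)
    nlinarith [inv_pos.2 hy0])
  rw [Real.log_inv, inv_inv] at h
  linarith

/-- the smooth branch. -/
noncomputable def fAux (y : ℝ) : ℝ := (y * y - y - y * Real.log y) / (y - 1) ^ 2

lemma fAux_hasDerivAt {y : ℝ} (hy0 : 0 < y) (hy1 : y ≠ 1) :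
    HasDerivAt fAux
      (((2*y - 2 - Real.log y) * (y-1)^2 - (y*y - y - y*Real.log y) * (2*(y-1))) / ((y-1)^2)^2)
      y := by
  have hy0' : y ≠ 0 := ne_of_gt hy0
  have hden : (y - 1) ^ 2 ≠ 0 := pow_ne_zero 2 (sub_ne_zero.2 hy1)
  have hN : HasDerivAt (fun y : ℝ => y * y - y - y * Real.log y) (2*y - 2 - Real.log y) y := by
    have h1 : HasDerivAt (fun y : ℝ => y * y) (1 * y + y * 1) y :=
      (hasDerivAt_id y).mul (hasDerivAt_id y)
    have h2 : HasDerivAt (fun y : ℝ => y * Real.log y) (1 * Real.log y + y * y⁻¹) y :=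
      (hasDerivAt_id y).mul (Real.hasDerivAt_log hy0')
    have := (h1.fun_sub (hasDerivAt_id y)).fun_sub h2
    refine this.congr_deriv ?_
    field_simp
    ring
  have hD : HasDerivAt (fun y : ℝ => (y - 1) ^ 2) (2 * (y - 1)) y := by
    have := ((hasDerivAt_id y).sub_const 1).fun_pow 2
    refine this.congr_deriv ?_
    simp [mul_comm]
  exact hN.div hD hden

lemma fAux_deriv_nonneg {y : ℝ} (hy0 : 0 < y) (hy1 : y ≠ 1) :
    0 ≤ ((2*y - 2 - Real.log y) * (y-1)^2 - (y*y - y - y*Real.log y) * (2*(y-1))) / ((y-1)^2)^2 := by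
  apply div_nonneg _ (by positivity)
  have hkey : (2*y - 2 - Real.log y) * (y-1)^2 - (y*y - y - y*Real.log y) * (2*(y-1))
      = (y - 1) * ((y + 1) * Real.log y - 2 * (y - 1)) := by ring
  rw [hkey]
  rcases lt_or_gt_of_ne hy1 with h | h
  · have := keyB' y hy0 h.le
    nlinarith
  · have := keyB y h.le
    nlinarith

lemma fAux_mono_Ioi : MonotoneOn fAux (Set.Ioi 1) := by
  apply monotoneOn_of_deriv_nonneg (convex_Ioi 1)
  · intro t ht
    have ht1 : (1:ℝ) < t := ht
    exact ((fAux_hasDerivAt (by linarith) (ne_of_gt ht1)).continuousAt).continuousWithinAt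
  · rw [interior_Ioi]
    intro t ht
    have ht1 : (1:ℝ) < t := ht
    exact ((fAux_hasDerivAt (by linarith) (ne_of_gt ht1)).differentiableAt).differentiableWithinAt
  · rw [interior_Ioi]
    intro t ht
    have ht1 : (1:ℝ) < t := ht
    rw [(fAux_hasDerivAt (by linarith) (ne_of_gt ht1)).deriv]
    exact fAux_deriv_nonneg (by linarith) (ne_of_gt ht1)

lemma fAux_mono_Ioo : MonotoneOn fAux (Set.Ioo 0 1) := by
  apply monotoneOn_of_deriv_nonneg (convex_Ioo 0 1)
  · intro t ht
    exact ((fAux_hasDerivAt ht.1 (ne_of_lt ht.2)).continuousAt).continuousWithinAt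
  · rw [interior_Ioo]
    intro t ht
    exact ((fAux_hasDerivAt ht.1 (ne_of_lt ht.2)).differentiableAt).differentiableWithinAt
  · rw [interior_Ioo]
    intro t ht
    rw [(fAux_hasDerivAt ht.1 (ne_of_lt ht.2)).deriv]
    exact fAux_deriv_nonneg ht.1 (ne_of_lt ht.2)

lemma fAux_ge {y : ℝ} (hy : 1 < y) : 1/2 ≤ fAux y := by
  have hy0 : (0:ℝ) < y := by linarith
  have hA := keyA y hy.le
  have hinv : y * y⁻¹ = 1 := mul_inv_cancel₀ (ne_of_gt hy0)
  have hnum : (y - 1)^2 / 2 ≤ y * y - y - y * Real.log y := by nlinarith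
  have hden : (0:ℝ) < (y - 1)^2 := by
    have : y - 1 ≠ 0 := sub_ne_zero.2 (ne_of_gt hy)
    positivity
  rw [fAux, le_div_iff₀ hden]
  nlinarith

lemma fAux_le {y : ℝ} (hy0 : 0 < y) (hy : y < 1) : fAux y ≤ 1/2 := by
  have hA := keyA' y hy0 hy.le
  have hinv : y * y⁻¹ = 1 := mul_inv_cancel₀ (ne_of_gt hy0)
  have hden : (0:ℝ) < (y - 1)^2 := by
    have : y - 1 ≠ 0 := sub_ne_zero.2 (ne_of_lt hy)
    positivity
  rw [fAux, div_le_iff₀ hden]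
  nlinarith

/-- positivity of the branch -/
lemma fAux_pos {y : ℝ} (hy0 : 0 < y) (hy1 : y ≠ 1) : 0 < fAux y := by
  have hlog := Real.log_lt_sub_one_of_pos hy0 hy1
  have hden : (0:ℝ) < (y - 1)^2 := by
    have : y - 1 ≠ 0 := sub_ne_zero.2 hy1
    positivity
  apply div_pos _ hden
  nlinarith

noncomputable def phiZetaG (y : ℝ) : ℝ := if y = 1 then 1/2 else fAux y

lemma phiZetaG_pos {y : ℝ} (hy0 : 0 < y) : 0 < phiZetaG y := by
  unfold phiZetaG
  split_ifs with h
  · norm_num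
  · exact fAux_pos hy0 h

lemma phiZetaG_mono : MonotoneOn phiZetaG (Set.Ioi 0) := by
  intro x hx y hy hxy
  simp only [Set.mem_Ioi] at hx hy
  unfold phiZetaG
  rcases lt_trichotomy x 1 with hx1 | hx1 | hx1
  · rw [if_neg (ne_of_lt hx1)]
    rcases lt_trichotomy y 1 with hy1 | hy1 | hy1
    · rw [if_neg (ne_of_lt hy1)]
      exact fAux_mono_Ioo ⟨hx, hx1⟩ ⟨hy, hy1⟩ hxy
    · rw [if_pos hy1]
      exact fAux_le hx hx1
    · rw [if_neg (ne_of_gt hy1)]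
      exact le_trans (fAux_le hx hx1) (fAux_ge hy1)
  · rw [if_pos hx1]
    rcases eq_or_lt_of_le hxy with h | h
    · rw [← h, if_pos hx1]
    · have hy1 : 1 < y := hx1 ▸ h
      rw [if_neg (ne_of_gt hy1)]
      exact fAux_ge hy1
  · have hy1 : 1 < y := lt_of_lt_of_le hx1 hxy
    rw [if_neg (ne_of_gt hx1), if_neg (ne_of_gt hy1)]
    exact fAux_mono_Ioi hx1 hy1 hxy

lemma zetaPhiRatio_eq_inv {y : ℝ} (hy0 : 0 < y) : zetaPhiRatio y = (phiZetaG y)⁻¹ := by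
  unfold zetaPhiRatio phiZetaG
  split_ifs with h
  · norm_num
  · have hy0' : y ≠ 0 := ne_of_gt hy0
    have hphi : y - 1 - Real.log y ≠ 0 := by
      have := Real.log_lt_sub_one_of_pos hy0 h
      linarith
    rw [fAux, inv_div, div_div]
    congr 1
    ring
  
theorem zetaPhiRatio_antitone : AntitoneOn zetaPhiRatio (Set.Ioi (0 : ℝ)) := by
  intro x hx y hy hxy
  simp only [Set.mem_Ioi] at hx hy
  rw [zetaPhiRatio_eq_inv hx, zetaPhiRatio_eq_inv hy]
  exact inv_anti₀ (phiZetaG_pos hx) (phiZetaG_mono hx hy hxy)
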